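/- Pawlikowska's theorem: Let n be a positive integer and let f : ℝ → ℝ be n-times differentiable at every point of the closed interval [a,b] (with a < b). If f^{(n)}(a) = f^{(n)}(b), then there exists a point η ∈ (a,b) such that (f(η) - f(a))/(η - a) = Σ_{i=1}^{n} ((-1)^{i+1}/i!) · (η-a)^{i-1} · f^{(i)}(η); equivalently, f(a) = T_n(f,η)(a). -/

import Mathlib

open Set Filter Asymptotics Finset

namespace PawlikowskaAux

variable {a b : ℝ}

lemma telescope_hasDerivWithinAt {n : ℕ} (hn : 1 ≤ n) (u : ℕ → ℝ → ℝ)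
    (hu : ∀ k < n, ∀ x ∈ Icc a b, HasDerivWithinAt (u k) (u (k+1) x) (Icc a b) x)
    {x : ℝ} (hx : x ∈ Icc a b) :
    HasDerivWithinAt (fun y => ∑ k ∈ range n, (-1:ℝ)^k / (k.factorial : ℝ) * (y - a)^k * u k y)
      ((-1:ℝ)^(n-1) / ((n-1).factorial : ℝ) * (x - a)^(n-1) * u n x) (Icc a b) x := by
  set D : ℕ → ℝ := fun k => (-1:ℝ)^(k+1) * (x-a)^(k-1) * u k x * k / (k.factorial : ℝ) with hD
  have term : ∀ k < n, HasDerivWithinAt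
      (fun y => (-1:ℝ)^k / (k.factorial : ℝ) * (y - a)^k * u k y)
      (D (k+1) - D k) (Icc a b) x := by
    intro k hk
    have hpow : HasDerivAt (fun y : ℝ => (-1:ℝ)^k / (k.factorial : ℝ) * (y - a)^k)
        ((-1:ℝ)^k / (k.factorial : ℝ) * ((k:ℝ) * (x - a)^(k-1))) x := by
      have := (((hasDerivAt_id x).sub_const a).pow k).const_mul ((-1:ℝ)^k / (k.factorial : ℝ))
      simpa using this
    have hmul := hpow.hasDerivWithinAt.fun_mul (hu k hk x hx)
    refine hmul.congr_deriv (Eq.symm ?_)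
    have hfac : ((k.factorial : ℝ)) ≠ 0 := by positivity
    match k with
    | 0 => simp [hD]
    | (m+1) =>
      have hfm : ((m.factorial : ℝ)) ≠ 0 := by positivity
      simp only [hD, Nat.factorial_succ]
      push_cast
      field_simp
      ring
  have main := HasDerivWithinAt.fun_sum (fun k hk => term k (Finset.mem_range.mp hk))
  have hsum : ∑ k ∈ range n, (D (k+1) - D k) = D n - D 0 := Finset.sum_range_sub D n
  rw [hsum] at main
  refine main.congr_deriv (Eq.symm ?_)
  obtain ⟨m, rfl⟩ : ∃ m, n = m + 1 := ⟨n - 1, (Nat.succ_pred_eq_of_pos hn).symm⟩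
  have hfm : ((m.factorial : ℝ)) ≠ 0 := by positivity
  simp only [hD, Nat.factorial_succ, Nat.add_sub_cancel]
  push_cast
  field_simp
  ring


variable {a b : ℝ}

lemma hasDerivAt_P (C : ℕ → ℝ) (n k : ℕ) (hk : k < n) (x : ℝ) :
    HasDerivAt (fun y => ∑ j ∈ range (n+1-k), C (j+k) / (j.factorial : ℝ) * (y - a)^j)
      (∑ j ∈ range (n+1-(k+1)), C (j+(k+1)) / (j.factorial : ℝ) * (x - a)^j) x := by
  have h1 : HasDerivAt (fun y => ∑ j ∈ range (n+1-k), C (j+k) / (j.factorial : ℝ) * (y - a)^j)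
      (∑ j ∈ range (n+1-k), C (j+k) / (j.factorial : ℝ) * ((j:ℝ) * (x - a)^(j-1))) x := by
    apply HasDerivAt.fun_sum
    intro j _
    have := (((hasDerivAt_id x).sub_const a).pow j).const_mul (C (j+k) / (j.factorial : ℝ))
    simpa using this
  convert h1 using 1
  have hnk : n + 1 - k = (n - k) + 1 := by omega
  have hnk' : n + 1 - (k+1) = n - k := by omega
  rw [hnk, hnk', Finset.sum_range_succ']
  simp only [Nat.cast_zero, zero_mul, mul_zero, add_zero, Nat.factorial_zero]
  apply Finset.sum_congr rfl
  intro j _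
  have he : j + 1 + k = j + (k + 1) := by omega
  rw [he]
  have hfj : ((j.factorial : ℝ)) ≠ 0 := by positivity
  rw [Nat.factorial_succ]
  push_cast
  field_simp

lemma sum_at_base {n : ℕ} (hn : 1 ≤ n) (w : ℕ → ℝ) :
    ∑ k ∈ range n, (-1:ℝ)^k / (k.factorial : ℝ) * (0:ℝ)^k * w k = w 0 := by
  rw [Finset.sum_eq_single_of_mem 0 (Finset.mem_range.mpr hn)]
  · simp
  · intro k _ hk
    simp [zero_pow hk]

lemma hP_eq (hab : a < b) {n : ℕ} (hn : 1 ≤ n) (C : ℕ → ℝ) : ∀ x ∈ Icc a b,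
    ∑ k ∈ range n, (-1:ℝ)^k / (k.factorial : ℝ) * (x - a)^k *
        (∑ j ∈ range (n+1-k), C (j+k) / (j.factorial : ℝ) * (x - a)^j)
      = C 0 + (-1:ℝ)^(n-1) / ((n-1).factorial : ℝ) * C n / n * (x - a)^n := by
  set P : ℕ → ℝ → ℝ := fun k x => ∑ j ∈ range (n+1-k), C (j+k) / (j.factorial : ℝ) * (x - a)^j
    with hPdef
  have hPn : ∀ x : ℝ, P n x = C n := by
    intro x
    have he : n + 1 - n = 1 := by omega
    simp [hPdef, he]
  set c : ℝ := (-1:ℝ)^(n-1) / ((n-1).factorial : ℝ) with hc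
  set hP : ℝ → ℝ := fun x => (∑ k ∈ range n, (-1:ℝ)^k / (k.factorial : ℝ) * (x - a)^k * P k x)
      - c * C n / n * (x - a)^n with hhP
  have hderiv : ∀ x ∈ Icc a b, HasDerivWithinAt hP 0 (Icc a b) x := by
    intro x hx
    have h1 := telescope_hasDerivWithinAt hn P
      (fun k hk x hx => (hasDerivAt_P C n k hk x).hasDerivWithinAt) hx
    have h2 : HasDerivAt (fun y : ℝ => c * C n / n * (y - a)^n)
        (c * C n / n * ((n:ℝ) * (x - a)^(n-1))) x := by
      have := (((hasDerivAt_id x).sub_const a).pow n).const_mul (c * C n / n)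
      simpa using this
    have h3 := h1.fun_sub h2.hasDerivWithinAt
    refine h3.congr_deriv (Eq.symm ?_)
    rw [hPn x]
    have hn0 : (n:ℝ) ≠ 0 := by positivity
    have hf0 : (((n-1).factorial : ℝ)) ≠ 0 := by positivity
    rw [← hc]
    field_simp
    ring
  have hconst : ∀ x ∈ Icc a b, hP x = hP a := by
    intro x hx
    have := (convex_Icc a b).norm_image_sub_le_of_norm_hasDerivWithin_le
      (f' := fun _ => (0:ℝ)) (C := 0) hderiv (fun x _ => by simp)
      (left_mem_Icc.mpr hab.le) hx
    simpa [sub_eq_zero] using this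
  intro x hx
  have h0 : hP a = C 0 := by
    have h0n : (0:ℝ)^n = 0 := zero_pow (by omega)
    have e2 : P 0 a = C 0 := by
      rw [hPdef]
      simp only []
      rw [Finset.sum_eq_single_of_mem 0 (Finset.mem_range.mpr (by omega))]
      · simp
      · intro k _ hk
        simp [sub_self, zero_pow hk]
    have e1 : ∑ k ∈ range n, (-1:ℝ)^k / (k.factorial : ℝ) * (0:ℝ)^k * P k a = C 0 := by
      rw [Finset.sum_eq_single_of_mem 0 (Finset.mem_range.mpr hn)]
      · simp [e2]
      · intro k _ hk
        simp [zero_pow hk]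
    simp [hhP, sub_self, h0n, e1]
  have := hconst x hx
  rw [h0] at this
  have : (∑ k ∈ range n, (-1:ℝ)^k / (k.factorial : ℝ) * (x - a)^k * P k x)
      = C 0 + c * C n / n * (x - a)^n := by
    rw [hhP] at this
    linarith [this]
  rw [this]


lemma littleO_step (hab : a < b) {v v' : ℝ → ℝ} (hv0 : v a = 0)
    (hv : ∀ x ∈ Icc a b, HasDerivWithinAt v (v' x) (Icc a b) x) {m : ℕ}
    (h : v' =o[nhdsWithin a (Icc a b)] fun x => (x - a)^m) :
    v =o[nhdsWithin a (Icc a b)] fun x => (x - a)^(m+1) := by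
  rw [isLittleO_iff] at h ⊢
  intro ε hε
  have h' := (Metric.nhdsWithin_basis_ball.eventually_iff).mp (h hε)
  rw [Metric.nhdsWithin_basis_ball.eventually_iff]
  obtain ⟨δ, hδ, hb⟩ := h'
  refine ⟨δ, hδ, fun x hx => ?_⟩
  obtain ⟨hxd, hxs⟩ := hx
  rw [Metric.mem_ball] at hxd
  have hax : a ≤ x := hxs.1
  have hsub : Icc a x ⊆ Icc a b := Icc_subset_Icc le_rfl hxs.2
  have bound : ∀ t ∈ Icc a x, ‖v' t‖ ≤ ε * (x - a)^m := by
    intro t ht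
    have hts : t ∈ Icc a b := hsub ht
    have htd : dist t a < δ := by
      rw [Real.dist_eq] at hxd ⊢
      rw [abs_of_nonneg (by linarith [ht.1])]
      rw [abs_of_nonneg (by linarith [hax])] at hxd
      linarith [ht.2]
    have := hb ⟨Metric.mem_ball.mpr htd, hts⟩
    refine this.trans ?_
    rw [Real.norm_eq_abs, abs_pow, abs_of_nonneg (by linarith [ht.1])]
    have : (t - a)^m ≤ (x - a)^m := pow_le_pow_left₀ (by linarith [ht.1]) (by linarith [ht.2]) m
    nlinarith [pow_nonneg (sub_nonneg.mpr ht.1 : (0:ℝ) ≤ t - a) m]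
  have key := (convex_Icc a x).norm_image_sub_le_of_norm_hasDerivWithin_le
    (fun t ht => (hv t (hsub ht)).mono hsub) bound (left_mem_Icc.mpr hax) (right_mem_Icc.mpr hax)
  rw [hv0, sub_zero] at key
  calc ‖v x‖ ≤ ε * (x - a)^m * ‖x - a‖ := key
    _ = ε * ‖(x - a)^(m+1)‖ := by
        rw [Real.norm_eq_abs, Real.norm_eq_abs, abs_of_nonneg (by linarith), abs_pow,
          abs_of_nonneg (by linarith)]
        ring

lemma littleO_iterate (hab : a < b) {n : ℕ} (u : ℕ → ℝ → ℝ)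
    (hu : ∀ k < n, ∀ x ∈ Icc a b, HasDerivWithinAt (u k) (u (k+1) x) (Icc a b) x)
    (hz : ∀ j ≤ n, u j a = 0) :
    ∀ k < n, (u k) =o[nhdsWithin a (Icc a b)] fun x => (x - a)^(n - k) := by
  have ha : a ∈ Icc a b := left_mem_Icc.mpr hab.le
  have key : ∀ d : ℕ, ∀ k, k + (d + 1) = n → (u k) =o[nhdsWithin a (Icc a b)] fun x => (x - a)^(d+1) := by
    intro d
    induction d with
    | zero =>
      intro k hk
      have h1 : HasDerivWithinAt (u k) (u (k+1) a) (Icc a b) a :=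
        hu k (by omega) a ha
      have h2 : u (k+1) a = 0 := hz (k+1) (by omega)
      rw [h2] at h1
      have := h1.isLittleO
      simpa [hz k (by omega)] using this
    | succ d ih =>
      intro k hk
      have hk1 := ih (k+1) (by omega)
      have := littleO_step hab (hz k (by omega)) (fun x hx => hu k (by omega) x hx) hk1
      exact this
  intro k hk
  have : n - k = (n - k - 1) + 1 := by omega
  rw [this]
  exact key (n - k - 1) k (by omega)


lemma contPhi (hab : a < b) {n : ℕ} (h h' : ℝ → ℝ)
    (hd : ∀ x ∈ Icc a b, HasDerivWithinAt h (h' x) (Icc a b) x)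
    (ha0 : h a = 0)
    (ho : h =o[nhdsWithin a (Icc a b)] fun x => (x - a)^n) :
    ContinuousOn (fun x => h x / (x - a)^n) (Icc a b) := by
  intro x hx
  rcases eq_or_ne x a with rfl | hne
  · have : Tendsto (fun y => h y / (y - x)^n) (nhdsWithin x (Icc x b)) (nhds 0) :=
      ho.tendsto_div_nhds_zero
    have h0 : h x / (x - x)^n = 0 := by simp [ha0]
    rw [ContinuousWithinAt, h0]
    exact this
  · have hxa : a < x := lt_of_le_of_ne hx.1 (Ne.symm hne)
    have hpow : ((x - a)^n) ≠ 0 := pow_ne_zero _ (ne_of_gt (by linarith))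
    exact ((hd x hx).continuousWithinAt).div
      ((continuous_pow n).comp (continuous_id.sub continuous_const)).continuousWithinAt hpow


lemma fermat_case (hab : a < b) {n : ℕ} (hn : 1 ≤ n) (h h' : ℝ → ℝ)
    (hd : ∀ x ∈ Icc a b, HasDerivWithinAt h (h' x) (Icc a b) x)
    (hdb : h' b = 0) (ha0 : h a = 0)
    (ho : h =o[nhdsWithin a (Icc a b)] fun x => (x - a)^n)
    (hpos : 0 < h b) :
    ∃ η ∈ Ioo a b, (η - a) * h' η = n * h η := by
  set φ : ℝ → ℝ := fun x => h x / (x - a)^n with hφ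
  have hφa : φ a = 0 := by simp [hφ, ha0]
  have hba : (0:ℝ) < (b - a)^n := pow_pos (by linarith) n
  have cont : ContinuousOn φ (Icc a b) := contPhi hab h h' hd ha0 ho
  have hφb : 0 < φ b := div_pos hpos hba
  -- derivative of φ at b is negative
  have hder_b : HasDerivWithinAt φ
      ((h' b * (b - a)^n - h b * ((n:ℝ) * (b - a)^(n-1))) / ((b - a)^n)^2) (Icc a b) b := by
    refine (hd b (right_mem_Icc.mpr hab.le)).div ?_ (by positivity)
    exact (by simpa using (((hasDerivAt_id b).sub_const a).fun_pow n).hasDerivWithinAt :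
      HasDerivWithinAt (fun y : ℝ => (y - a)^n) ((n:ℝ) * (b - a)^(n-1)) (Icc a b) b)
  have hdneg : (h' b * (b - a)^n - h b * ((n:ℝ) * (b - a)^(n-1))) / ((b - a)^n)^2 < 0 := by
    apply div_neg_of_neg_of_pos
    · rw [hdb]
      have h1 : (0:ℝ) < (b - a)^(n-1) := pow_pos (by linarith) _
      have h2 : (0:ℝ) < (n:ℝ) := by positivity
      nlinarith [mul_pos hpos (mul_pos h2 h1)]
    · positivity
  -- find a point x₀ < b with φ x₀ > φ b
  have hslope := hasDerivWithinAt_iff_tendsto_slope.mp hder_b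
  have hnb' : (nhdsWithin b (Ico a b)).NeBot := by
    rw [← mem_closure_iff_nhdsWithin_neBot, closure_Ico hab.ne]
    exact right_mem_Icc.mpr hab.le
  have hnb : (nhdsWithin b (Icc a b \ {b})).NeBot :=
    Filter.neBot_of_le (nhdsWithin_mono b (fun y (hy : y ∈ Ico a b) => ⟨⟨hy.1, hy.2.le⟩, ne_of_lt hy.2⟩))
  have hev : ∀ᶠ x in nhdsWithin b (Icc a b \ {b}), slope φ b x < 0 :=
    hslope.eventually_lt_const hdneg
  have hmem : ∀ᶠ x in nhdsWithin b (Icc a b \ {b}), x ∈ Icc a b \ {b} :=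
    self_mem_nhdsWithin
  obtain ⟨x₀, hsl₀, hx₀⟩ := (hev.and hmem).exists
  have hx₀b : x₀ < b := lt_of_le_of_ne hx₀.1.2 (by simpa using hx₀.2)
  have hφx₀ : φ b < φ x₀ := by
    rw [slope_def_field] at hsl₀
    rcases div_neg_iff.mp hsl₀ with ⟨h1, h2⟩ | ⟨h1, h2⟩ <;> linarith
  obtain ⟨η, hηmem, hmax⟩ := isCompact_Icc.exists_isMaxOn (nonempty_Icc.mpr hab.le) cont
  have hφη : φ b < φ η := lt_of_lt_of_le hφx₀ (hmax hx₀.1)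
  have hηb : η < b := lt_of_le_of_ne hηmem.2 (fun he => by rw [he] at hφη; linarith)
  have hηa : a < η := lt_of_le_of_ne hηmem.1 (fun he => by rw [← he, hφa] at hφη; linarith)
  have hηIoo : η ∈ Ioo a b := ⟨hηa, hηb⟩
  have hpowη : (0:ℝ) < (η - a)^n := pow_pos (by linarith) n
  set M : ℝ := φ η with hM
  have hMη : h η = M * (η - a)^n := by
    rw [hM, hφ]
    field_simp
  have hψmax : IsMaxOn (fun x => h x - M * (x - a)^n) (Icc a b) η := by
    intro x hx
    simp only [Set.mem_setOf_eq]
    have hψη : h η - M * (η - a)^n = 0 := by rw [hMη]; ring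
    rw [hψη]
    rcases eq_or_ne x a with rfl | hne
    · simp [ha0, zero_pow (by omega : n ≠ 0)]
    · have hxa : a < x := lt_of_le_of_ne hx.1 (Ne.symm hne)
      have hpx : (0:ℝ) < (x - a)^n := pow_pos (by linarith) n
      have : φ x ≤ M := hmax hx
      rw [hφ] at this
      simp only at this
      rw [div_le_iff₀ hpx] at this
      linarith
  have hIccnhds : Icc a b ∈ nhds η := Icc_mem_nhds hηa hηb
  have hloc : IsLocalMax (fun x => h x - M * (x - a)^n) η := hψmax.isLocalMax hIccnhds
  have hψder : HasDerivAt (fun x => h x - M * (x - a)^n)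
      (h' η - M * ((n:ℝ) * (η - a)^(n-1))) η := by
    refine HasDerivAt.sub ((hd η hηmem).hasDerivAt hIccnhds) ?_
    have := (((hasDerivAt_id η).sub_const a).pow n).const_mul M
    simpa using this
  have hzero := hloc.hasDerivAt_eq_zero hψder
  refine ⟨η, hηIoo, ?_⟩
  have heq : h' η = M * ((n:ℝ) * (η - a)^(n-1)) := by linarith [hzero]
  rw [heq, hMη]
  have hp : (η - a)^(n-1) * (η - a) = (η - a)^n := by
    rw [← pow_succ]
    congr 1
    omega
  calc (η - a) * (M * ((n:ℝ) * (η - a)^(n-1))) = M * (n:ℝ) * ((η - a)^(n-1) * (η - a)) := by ring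
    _ = (n:ℝ) * (M * (η - a)^n) := by rw [hp]; ring


lemma main_aux (hab : a < b) {n : ℕ} (hn : 1 ≤ n) (u : ℕ → ℝ → ℝ)
    (hu : ∀ k < n, ∀ x ∈ Icc a b, HasDerivWithinAt (u k) (u (k+1) x) (Icc a b) x)
    (hends : u n a = u n b) :
    ∃ η ∈ Ioo a b, u 0 a = ∑ k ∈ Finset.range (n+1),
      (-1:ℝ)^k / (Nat.factorial k : ℝ) * (η - a)^k * u k η := by
  set C : ℕ → ℝ := fun j => u j a with hC
  set P : ℕ → ℝ → ℝ := fun k x => ∑ j ∈ Finset.range (n+1-k),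
      C (j+k) / (Nat.factorial j : ℝ) * (x - a)^j with hP
  have hPu : ∀ k < n, ∀ x ∈ Icc a b, HasDerivWithinAt (P k) (P (k+1) x) (Icc a b) x :=
    fun k hk x _ => (hasDerivAt_P C n k hk x).hasDerivWithinAt
  set r : ℕ → ℝ → ℝ := fun k x => u k x - P k x with hr
  have hru : ∀ k < n, ∀ x ∈ Icc a b, HasDerivWithinAt (r k) (r (k+1) x) (Icc a b) x :=
    fun k hk x hx => (hu k hk x hx).sub (hPu k hk x hx)
  have hPja : ∀ j ≤ n, P j a = C j := by
    intro j hj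
    rw [hP]
    simp only []
    rw [Finset.sum_eq_single_of_mem 0 (Finset.mem_range.mpr (by omega))]
    · simp
    · intro k _ hk
      simp [zero_pow hk]
  have hrz : ∀ j ≤ n, r j a = 0 := by
    intro j hj
    rw [hr]
    simp only []
    rw [hPja j hj]
    simp [hC]
  have hlo : ∀ k < n, (r k) =o[nhdsWithin a (Icc a b)] fun x => (x - a)^(n - k) :=
    littleO_iterate hab r hru hrz
  set c : ℝ := (-1:ℝ)^(n-1) / ((n-1).factorial : ℝ) with hc
  set h : ℝ → ℝ := fun x => (∑ k ∈ Finset.range n,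
      (-1:ℝ)^k / (Nat.factorial k : ℝ) * (x - a)^k * u k x)
      - C 0 - c * C n / n * (x - a)^n with hh
  have hEq : ∀ x ∈ Icc a b, h x = ∑ k ∈ Finset.range n,
      (-1:ℝ)^k / (Nat.factorial k : ℝ) * (x - a)^k * r k x := by
    intro x hx
    have hsplit : ∑ k ∈ Finset.range n, (-1:ℝ)^k / (Nat.factorial k : ℝ) * (x - a)^k * u k x
        = (∑ k ∈ Finset.range n, (-1:ℝ)^k / (Nat.factorial k : ℝ) * (x - a)^k * P k x)
          + ∑ k ∈ Finset.range n, (-1:ℝ)^k / (Nat.factorial k : ℝ) * (x - a)^k * r k x := by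
      rw [← Finset.sum_add_distrib]
      apply Finset.sum_congr rfl
      intro k _
      rw [hr]
      ring
    have hPsum := hP_eq hab hn C x hx
    rw [hh]
    simp only []
    rw [hsplit, hPsum, ← hc]
    ring
  have ho : h =o[nhdsWithin a (Icc a b)] fun x => (x - a)^n := by
    have hsum : (fun x => ∑ k ∈ Finset.range n,
        (-1:ℝ)^k / (Nat.factorial k : ℝ) * (x - a)^k * r k x)
        =o[nhdsWithin a (Icc a b)] fun x => (x - a)^n := by
      apply Asymptotics.IsLittleO.fun_sum
      intro k hk
      have hk' := Finset.mem_range.mp hk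
      have h1 : (fun x : ℝ => (-1:ℝ)^k / (Nat.factorial k : ℝ) * (x - a)^k)
          =O[nhdsWithin a (Icc a b)] fun x => (x - a)^k :=
        (Asymptotics.isBigO_refl (fun x : ℝ => (x - a)^k) _).const_mul_left _
      have h2 := h1.mul_isLittleO (hlo k hk')
      refine h2.congr (fun x => by ring) (fun x => ?_)
      rw [← pow_add]
      congr 1
      omega
    refine hsum.congr' ?_ (Filter.EventuallyEq.refl _ _)
    filter_upwards [self_mem_nhdsWithin] with x hx
    exact (hEq x hx).symm
  set h' : ℝ → ℝ := fun x => c * (x - a)^(n-1) * (u n x - C n) with hh'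
  have hd : ∀ x ∈ Icc a b, HasDerivWithinAt h (h' x) (Icc a b) x := by
    intro x hx
    have h1 := telescope_hasDerivWithinAt hn u hu hx
    have h2 : HasDerivAt (fun y : ℝ => c * C n / n * (y - a)^n)
        (c * C n / n * ((n:ℝ) * (x - a)^(n-1))) x := by
      have := (((hasDerivAt_id x).sub_const a).pow n).const_mul (c * C n / n)
      simpa using this
    have h3 := (h1.sub_const (C 0)).fun_sub h2.hasDerivWithinAt
    refine h3.congr_deriv (Eq.symm ?_)
    rw [hh', ← hc]
    have hn0 : (n:ℝ) ≠ 0 := by positivity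
    field_simp
  have hdb : h' b = 0 := by
    have hub : u n b = C n := by rw [hC]; exact hends.symm
    simp only [hh', hub]
    ring
  have ha0 : h a = 0 := by
    rw [hEq a (left_mem_Icc.mpr hab.le)]
    apply Finset.sum_eq_zero
    intro k hk
    rcases Nat.eq_zero_or_pos k with rfl | hkpos
    · simp [hrz 0 (by omega)]
    · simp [sub_self, zero_pow (by omega : k ≠ 0)]
  have key : ∃ η ∈ Ioo a b, (η - a) * h' η = n * h η := by
    rcases lt_trichotomy (h b) 0 with hb0 | hb0 | hb0
    · obtain ⟨η, hη, hEqn⟩ := fermat_case hab hn (fun x => -h x) (fun x => -h' x)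
        (fun x hx => (hd x hx).neg) (by simp [hdb]) (by simp [ha0])
        ho.neg_left (by show 0 < -h b; linarith)
      exact ⟨η, hη, by linarith⟩
    · set φ : ℝ → ℝ := fun x => h x / (x - a)^n with hφ
      have cont : ContinuousOn φ (Icc a b) := contPhi hab h h' hd ha0 ho
      have hφab : φ a = φ b := by
        rw [hφ]
        simp [ha0, hb0]
      obtain ⟨η, hη, hder0⟩ := exists_deriv_eq_zero hab cont hφab
      have hηa : a < η := hη.1
      have hζ : (η - a) ≠ 0 := ne_of_gt (by linarith)
      have hpow : ((η - a)^n) ≠ 0 := pow_ne_zero _ hζ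
      have hIccnhds : Icc a b ∈ nhds η := Icc_mem_nhds hη.1 hη.2
      have hderφ : HasDerivAt φ
          ((h' η * (η - a)^n - h η * ((n:ℝ) * (η - a)^(n-1))) / ((η - a)^n)^2) η := by
        refine HasDerivAt.div ((hd η (Ioo_subset_Icc_self hη)).hasDerivAt hIccnhds) ?_ hpow
        have := ((hasDerivAt_id η).sub_const a).fun_pow n
        simpa using this
      rw [hderφ.deriv] at hder0
      have hnum : h' η * (η - a)^n - h η * ((n:ℝ) * (η - a)^(n-1)) = 0 := by
        rcases div_eq_zero_iff.mp hder0 with h1 | h1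
        · exact h1
        · exact absurd h1 (pow_ne_zero _ hpow)
      refine ⟨η, hη, ?_⟩
      have hp : (η - a)^n = (η - a)^(n-1) * (η - a) := by
        rw [← pow_succ]
        congr 1
        omega
      have hp1 : ((η - a)^(n-1)) ≠ 0 := pow_ne_zero _ hζ
      rw [hp] at hnum
      have hfact : (η - a)^(n-1) * ((η - a) * h' η - n * h η) = 0 := by linarith [hnum]
      rcases mul_eq_zero.mp hfact with h1 | h1
      · exact absurd h1 hp1
      · linarith
    · obtain ⟨η, hη, hEqn⟩ := fermat_case hab hn h h' hd hdb ha0 ho hb0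
      exact ⟨η, hη, hEqn⟩
  obtain ⟨η, hηIoo, hE⟩ := key
  refine ⟨η, hηIoo, ?_⟩
  have hηa : a < η := hηIoo.1
  rw [Finset.sum_range_succ]
  rw [hh', hh] at hE
  simp only [] at hE
  have hp : (η - a) * (η - a)^(n-1) = (η - a)^n := by
    rw [← pow_succ']
    congr 1
    omega
  have hfac : (Nat.factorial n : ℝ) = (n:ℝ) * ((n-1).factorial : ℝ) := by
    obtain ⟨m, rfl⟩ : ∃ m, n = m + 1 := ⟨n - 1, by omega⟩
    rw [Nat.factorial_succ]
    push_cast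
    simp
  have hsign : (-1:ℝ)^n = -(-1:ℝ)^(n-1) := by
    obtain ⟨m, hm⟩ : ∃ m, n = m + 1 := ⟨n - 1, by omega⟩
    rw [hm, pow_succ]
    simp
  have hn0 : (n:ℝ) ≠ 0 := by positivity
  have hfn0 : (((n-1).factorial : ℝ)) ≠ 0 := by positivity
  have hE2 : (n:ℝ) * C 0 = (n:ℝ) * (∑ k ∈ Finset.range n,
      (-1:ℝ)^k / (Nat.factorial k : ℝ) * (η - a)^k * u k η) - c * (η - a)^n * u n η := by
    have expand : (η - a) * (c * (η - a)^(n-1) * (u n η - C n))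
        = c * (η - a)^n * u n η - c * (η - a)^n * C n := by
      rw [← hp]; ring
    rw [expand] at hE
    have hcc : (n:ℝ) * (c * C n / n * (η - a)^n) = c * (η - a)^n * C n := by
      field_simp
    nlinarith [hE, hcc]
  have hCfinal : C 0 = (∑ k ∈ Finset.range n,
      (-1:ℝ)^k / (Nat.factorial k : ℝ) * (η - a)^k * u k η) - c / n * (η - a)^n * u n η := by
    field_simp at hE2 ⊢
    linarith
  show C 0 = _
  rw [hCfinal, hc, hfac, hsign]
  field_simp
  ring

end PawlikowskaAux


open PawlikowskaAux in
/-- **Pawlikowska's theorem.** Let `f` be `n`-times differentiable at every point of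
`[a,b]` (one-sidedly at the endpoints), where the iterated derivatives are taken within
`[a,b]`. If `f⁽ⁿ⁾(a) = f⁽ⁿ⁾(b)`, then there exists `η ∈ (a,b)` with
`(f(η) - f(a))/(η - a) = ∑_{i=1}^{n} ((-1)^{i+1}/i!)·(η-a)^{i-1}·f⁽ⁱ⁾(η)`. -/
theorem pawlikowska_theorem (f : ℝ → ℝ) (a b : ℝ) (n : ℕ) (hn : 1 ≤ n) (hab : a < b)
    (hf : ∀ i < n, ∀ x ∈ Set.Icc a b,
      DifferentiableWithinAt ℝ (iteratedDerivWithin i f (Set.Icc a b)) (Set.Icc a b) x)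
    (hends : iteratedDerivWithin n f (Set.Icc a b) a = iteratedDerivWithin n f (Set.Icc a b) b) :
    ∃ η ∈ Set.Ioo a b, (f η - f a) / (η - a) =
      ∑ i ∈ Finset.Icc 1 n, (-1 : ℝ) ^ (i + 1) / (Nat.factorial i) * (η - a) ^ (i - 1) *
        iteratedDerivWithin i f (Set.Icc a b) η := by
  have hs : UniqueDiffOn ℝ (Set.Icc a b) := uniqueDiffOn_Icc hab
  have hu : ∀ k < n, ∀ x ∈ Set.Icc a b, HasDerivWithinAt (iteratedDerivWithin k f (Set.Icc a b))
      (iteratedDerivWithin (k+1) f (Set.Icc a b) x) (Set.Icc a b) x := by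
    intro k hk x hx
    have h1 := (hf k hk x hx).hasDerivWithinAt
    rwa [← iteratedDerivWithin_succ] at h1
  obtain ⟨η, hηIoo, hfa⟩ := PawlikowskaAux.main_aux hab hn
    (fun k => iteratedDerivWithin k f (Set.Icc a b)) hu hends
  refine ⟨η, hηIoo, ?_⟩
  rw [iteratedDerivWithin_zero] at hfa
  have hηa : a < η := hηIoo.1
  have hηne : η - a ≠ 0 := ne_of_gt (by linarith)
  rw [div_eq_iff hηne, Finset.sum_mul]
  have hterm : ∀ i ∈ Finset.Icc 1 n,
      (-1:ℝ)^(i+1) / (Nat.factorial i : ℝ) * (η - a)^(i-1) *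
        iteratedDerivWithin i f (Set.Icc a b) η * (η - a)
      = -((-1:ℝ)^i / (Nat.factorial i : ℝ) * (η - a)^i *
          iteratedDerivWithin i f (Set.Icc a b) η) := by
    intro i hi
    have hi1 : 1 ≤ i := (Finset.mem_Icc.mp hi).1
    have hpi : (η - a)^(i-1) * (η - a) = (η - a)^i := by
      rw [← pow_succ]
      congr 1
      omega
    have hsi : (-1:ℝ)^(i+1) = -(-1:ℝ)^i := by rw [pow_succ]; ring
    rw [hsi, ← hpi]
    ring
  rw [Finset.sum_congr rfl hterm, Finset.sum_neg_distrib]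
  have hIcc_range : ∑ i ∈ Finset.Icc 1 n, ((-1:ℝ)^i / (Nat.factorial i : ℝ) * (η - a)^i *
        iteratedDerivWithin i f (Set.Icc a b) η)
      = ∑ k ∈ Finset.range n, ((-1:ℝ)^(k+1) / (Nat.factorial (k+1) : ℝ) * (η - a)^(k+1) *
        iteratedDerivWithin (k+1) f (Set.Icc a b) η) := by
    rw [← Finset.Ico_add_one_right_eq_Icc, Finset.sum_Ico_eq_sum_range]
    apply Finset.sum_congr rfl
    intro k _
    have h1k : 1 + k = k + 1 := by omega
    rw [h1k]
  rw [hIcc_range]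
  have hsplit := Finset.sum_range_succ' (fun k => (-1:ℝ)^k / (Nat.factorial k : ℝ) * (η - a)^k *
    iteratedDerivWithin k f (Set.Icc a b) η) n
  rw [hsplit] at hfa
  simp only [pow_zero, Nat.factorial_zero, Nat.cast_one, div_one, one_mul,
    iteratedDerivWithin_zero] at hfa
  linarith [hfa]
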